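/- Let l_1,...,l_p be linear forms on ℂ^n, let i ∈ {1,...,p}, and let ({i}, I, J) be a partition of {1,...,p} with |I| = n−1 such that the family (l_j)_{j ∈ I ∪ {i}} is a basis of the dual space. Let U_{i,J} be the unique constant vector field with U_{i,J}(l_i) = 1 and U_{i,J}(l_k) = 0 for k ∈ I, and let l_K denote ∏_{k∈K} l_k. Then the operator Ũ_{i,J} = l_i l_J U_{i,J} − l_J s_i − l_i Σ_{j∈J} l_{J∖{j}} U_{i,J}(l_j) s_j annihilates l_1^{s_1}···l_p^{s_p}, i.e., Ũ_{i,J}(l_1^{s_1}···l_p^{s_p}) = 0. -/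

import Mathlib

open MvPolynomial

namespace Paper

/-- The ring `ℂ[x₁,…,xₙ, s₁,…,s_p, y]`; variable `some (Sum.inl i)` is `xᵢ`,
`some (Sum.inr j)` is `sⱼ`, and `none` is `y`, destined to be `1/(l₁⋯l_p)`. -/
abbrev A (n p : ℕ) := MvPolynomial (Option (Fin n ⊕ Fin p)) ℂ

variable (n p : ℕ)

noncomputable def xv (i : Fin n) : A n p := X (some (Sum.inl i))
noncomputable def sv (j : Fin p) : A n p := X (some (Sum.inr j))
noncomputable def yv : A n p := X none

/-- A linear form on `ℂⁿ`, given by its coefficients, as a polynomial. -/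
noncomputable def lf (c : Fin n → ℂ) : A n p := ∑ i, MvPolynomial.C (c i) * xv n p i

/-- The value of a constant vector field `u` on a linear form with coefficients `c`. -/
noncomputable def ap {n : ℕ} (u c : Fin n → ℂ) : ℂ := ∑ m, u m * c m

/-- A family of linear forms is generic if every subfamily of `n` of them is
linearly independent. -/
def Generic {n p : ℕ} (l : Fin p → Fin n → ℂ) : Prop :=
  ∀ S : Finset (Fin p), S.card = n → LinearIndependent ℂ (fun i : S => l i.1)

variable (l : Fin p → Fin n → ℂ)

/-- The product `H = l₁ ⋯ l_p`. -/
noncomputable def Hp : A n p := ∏ j, lf n p (l j)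

/-- The relation `y·H = 1` presenting the localization `ℂ[x,s][1/H]`. -/
noncomputable def RI : Ideal (A n p) := Ideal.span {yv n p * Hp n p l - 1}

/-- The ring `ℂ[x,s][1/(l₁⋯l_p)]`, i.e. the free module generated by the symbol
`l₁^{s₁}⋯l_p^{s_p}`. -/
abbrev Rm := A n p ⧸ RI n p l

noncomputable def pr : A n p →ₐ[ℂ] Rm n p l := Ideal.Quotient.mkₐ ℂ _

/-- The constant-coefficient derivation of `A` in the direction `u`, extended to the
localization variable `y` by `∂y = -y²·∂(H)`. -/
noncomputable def d0 (u : Fin n → ℂ) : Derivation ℂ (A n p) (A n p) :=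
  mkDerivation ℂ fun v =>
    Option.casesOn v 0 (fun w => Sum.casesOn w (fun m => (MvPolynomial.C (u m) : A n p)) fun _ => 0)

noncomputable def dA (u : Fin n → ℂ) : Derivation ℂ (A n p) (A n p) :=
  d0 n p u + (-(yv n p) ^ 2 * d0 n p u (Hp n p l)) • pderiv none

lemma pd_none_lf (c : Fin n → ℂ) : pderiv none (lf n p c) = 0 := by
  simp [lf, xv, pderiv_X_of_ne]

lemma pd_none_Hp : pderiv none (Hp n p l) = 0 := by
  have key : ∀ s : Finset (Fin p), pderiv none (∏ j ∈ s, lf n p (l j)) = 0 := by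
    intro s
    induction s using Finset.induction_on with
    | empty => simp
    | @insert a s h ih =>
        rw [Finset.prod_insert h, Derivation.leibniz]
        simp [ih, pd_none_lf]
  exact key Finset.univ

lemma d0_yv (u : Fin n → ℂ) : d0 n p u (yv n p) = 0 := by
  simp [d0, yv, mkDerivation_X]

lemma d0_Xnone (u : Fin n → ℂ) : d0 n p u (X none : A n p) = 0 := by
  simp [d0, mkDerivation_X]

lemma dA_gen (u : Fin n → ℂ) :
    dA n p l u (yv n p * Hp n p l - 1) =
      (-(yv n p) * d0 n p u (Hp n p l)) * (yv n p * Hp n p l - 1) := by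
  have h1 : dA n p l u (yv n p) = -(yv n p) ^ 2 * d0 n p u (Hp n p l) := by
    simp [dA, d0_Xnone, yv, smul_eq_mul]
  have h2 : dA n p l u (Hp n p l) = d0 n p u (Hp n p l) := by
    simp [dA, pd_none_Hp, smul_eq_mul]
  have : dA n p l u (yv n p * Hp n p l - 1) =
      yv n p • dA n p l u (Hp n p l) + Hp n p l • dA n p l u (yv n p) := by
    rw [map_sub, Derivation.leibniz]
    simp
  rw [this, h1, h2]
  ring_nf

lemma dA_mem (u : Fin n → ℂ) :
    (RI n p l).restrictScalars ℂ ≤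
      ((RI n p l).restrictScalars ℂ).comap ((dA n p l u) : A n p →ₗ[ℂ] A n p) := by
  intro z hz
  simp only [Submodule.restrictScalars_mem] at hz ⊢
  rw [Submodule.mem_comap]
  simp only [Derivation.coeFn_coe]
  rw [RI, Ideal.mem_span_singleton] at hz
  obtain ⟨t, rfl⟩ := hz
  rw [Derivation.leibniz]
  simp only [Submodule.restrictScalars_mem, smul_eq_mul]
  rw [RI]
  apply Ideal.add_mem
  · exact Ideal.mul_mem_right _ _ (Ideal.subset_span (Set.mem_singleton _))
  · apply Ideal.mul_mem_left
    rw [dA_gen, Ideal.mem_span_singleton]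
    exact Dvd.intro_left _ rfl

/-- The (untwisted) action of the derivation in direction `u` on `ℂ[x,s][1/H]`. -/
noncomputable def dR (u : Fin n → ℂ) : Module.End ℂ (Rm n p l) :=
  (Submodule.Quotient.restrictScalarsEquiv ℂ (RI n p l)).toLinearMap ∘ₗ
    Submodule.mapQ _ _ ((dA n p l u) : A n p →ₗ[ℂ] A n p) (dA_mem n p l u) ∘ₗ
      (Submodule.Quotient.restrictScalarsEquiv ℂ (RI n p l)).symm.toLinearMap

/-- Multiplication by (the image of) a polynomial, as an operator on the symbol module. -/
noncomputable def Mop (a : A n p) : Module.End ℂ (Rm n p l) :=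
  LinearMap.mulLeft ℂ (pr n p l a)

/-- The twisted action of `∂_u` on the module generated by `l₁^{s₁}⋯l_p^{s_p}` :
`∂_u(g·l^s) = (∂_u g)·l^s + g·(∑ₖ sₖ u(lₖ)/lₖ)·l^s`. -/
noncomputable def Top (u : Fin n → ℂ) : Module.End ℂ (Rm n p l) :=
  dR n p l u +
    Mop n p l (∑ k, sv n p k * MvPolynomial.C (ap u (l k)) * yv n p *
      ∏ m ∈ Finset.univ.erase k, lf n p (l m))

/-- The algebra of operators `𝒟 = A_n(ℂ)[s₁,…,s_p]` acting (twistedly) on the module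
generated by the symbol `l₁^{s₁}⋯l_p^{s_p}` : it is generated by the multiplications by
the `xᵢ` and the `sⱼ` and by the twisted partial derivatives. -/
noncomputable def Dalg : Subalgebra ℂ (Module.End ℂ (Rm n p l)) :=
  Algebra.adjoin ℂ
    ((Set.range fun i => Mop n p l (xv n p i)) ∪
     (Set.range fun j => Mop n p l (sv n p j)) ∪
     (Set.range fun i : Fin n => Top n p l (Pi.single i 1)))


lemma dR_pr (u : Fin n → ℂ) (a : A n p) :
    dR n p l u (pr n p l a) = pr n p l (dA n p l u a) := by
  show _ = Ideal.Quotient.mk _ (dA n p l u a)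
  have h1 : pr n p l a = Submodule.Quotient.mk a := rfl
  rw [dR]
  simp only [LinearMap.comp_apply, LinearEquiv.coe_coe, h1,
    Submodule.Quotient.restrictScalarsEquiv_symm_mk, Submodule.mapQ_apply,
    Submodule.Quotient.restrictScalarsEquiv_mk, Derivation.coeFn_coe]
  rfl

/-- for a partition `({i}, I, J)` of `{1,…,p}` with `|I| = n−1` and
`(l_j)_{j∈I∪{i}}` a basis, the operator
`Ũ_{i,J} = lᵢ l_J U_{i,J} − l_J sᵢ − lᵢ ∑_{j∈J} l_{J∖{j}} U_{i,J}(l_j) s_j`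
annihilates the symbol `l₁^{s₁}⋯l_p^{s_p}`. -/
theorem stmt2 (n p : ℕ) (l : Fin p → Fin n → ℂ)
    (i : Fin p) (Iset Jset : Finset (Fin p))
    (hiI : i ∉ Iset) (hiJ : i ∉ Jset) (hIJ : Disjoint Iset Jset)
    (hcover : insert i (Iset ∪ Jset) = Finset.univ)
    (hcard : Iset.card = n - 1)
    (hbasis : LinearIndependent ℂ (fun k : (insert i Iset : Finset (Fin p)) => l k.1))
    (u : Fin n → ℂ) (hu1 : ap u (l i) = 1) (hu0 : ∀ k ∈ Iset, ap u (l k) = 0) :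
    (Mop n p l (lf n p (l i) * ∏ k ∈ Jset, lf n p (l k)) * Top n p l u
      - Mop n p l ((∏ k ∈ Jset, lf n p (l k)) * sv n p i)
      - ∑ j ∈ Jset, ap u (l j) •
          Mop n p l (lf n p (l i) * (∏ k ∈ Jset.erase j, lf n p (l k)) * sv n p j))
      (1 : Rm n p l) = 0 := by
  classical
  set li : A n p := lf n p (l i) with hli
  set PJ : A n p := ∏ k ∈ Jset, lf n p (l k) with hPJ
  set Sig : A n p := ∑ k, sv n p k * MvPolynomial.C (ap u (l k)) * yv n p *
      ∏ m ∈ Finset.univ.erase k, lf n p (l m) with hSig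
  -- step 1: compute the application to 1 as `pr` of one big polynomial
  have hTop1 : Top n p l u (1 : Rm n p l) = pr n p l Sig := by
    have h1 : (1 : Rm n p l) = pr n p l 1 := (map_one _).symm
    rw [Top, LinearMap.add_apply, h1, dR_pr, Derivation.map_one_eq_zero, map_zero,
      zero_add, Mop, LinearMap.mulLeft_apply, ← map_mul, mul_one]
  have hsmul : ∀ (c : ℂ) (e : A n p), c • pr n p l e = pr n p l (MvPolynomial.C c * e) := by
    intro c e
    rw [← MvPolynomial.smul_eq_C_mul, map_smul]
  have happ : (Mop n p l (li * PJ) * Top n p l u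
      - Mop n p l (PJ * sv n p i)
      - ∑ j ∈ Jset, ap u (l j) •
          Mop n p l (li * (∏ k ∈ Jset.erase j, lf n p (l k)) * sv n p j))
      (1 : Rm n p l) =
      pr n p l (li * PJ * Sig - PJ * sv n p i
        - ∑ j ∈ Jset, MvPolynomial.C (ap u (l j)) *
            (li * (∏ k ∈ Jset.erase j, lf n p (l k)) * sv n p j)) := by
    have hs : ∑ j ∈ Jset, ap u (l j) •
        pr n p l (li * (∏ k ∈ Jset.erase j, lf n p (l k)) * sv n p j) =
        pr n p l (∑ j ∈ Jset, MvPolynomial.C (ap u (l j)) *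
          (li * (∏ k ∈ Jset.erase j, lf n p (l k)) * sv n p j)) := by
      rw [map_sum]
      exact Finset.sum_congr rfl fun j _ => hsmul _ _
    simp only [LinearMap.sub_apply, Module.End.mul_apply, LinearMap.sum_apply,
      LinearMap.smul_apply, hTop1, Mop, LinearMap.mulLeft_apply, mul_one]
    rw [hs, ← map_mul, ← map_sub, ← map_sub]
  rw [happ]
  -- step 2: the big polynomial lies in the relation ideal
  rw [show pr n p l = Ideal.Quotient.mkₐ ℂ (RI n p l) from rfl, Ideal.Quotient.mkₐ_eq_mk,
    Ideal.Quotient.eq_zero_iff_mem, RI, Ideal.mem_span_singleton]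
  refine ⟨sv n p i * PJ + ∑ j ∈ Jset, MvPolynomial.C (ap u (l j)) * sv n p j * li *
      ∏ k ∈ Jset.erase j, lf n p (l k), ?_⟩
  have hiIJ : i ∉ Iset ∪ Jset := by simp [hiI, hiJ]
  have hsplit : Sig = (sv n p i * MvPolynomial.C (ap u (l i)) * yv n p *
        ∏ m ∈ Finset.univ.erase i, lf n p (l m)) +
      ∑ j ∈ Jset, sv n p j * MvPolynomial.C (ap u (l j)) * yv n p *
        ∏ m ∈ Finset.univ.erase j, lf n p (l m) := by
    rw [hSig, ← hcover, Finset.sum_insert hiIJ, Finset.sum_union hIJ, hcover]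
    have hI0 : ∑ k ∈ Iset, sv n p k * MvPolynomial.C (ap u (l k)) * yv n p *
        ∏ m ∈ Finset.univ.erase k, lf n p (l m) = 0 :=
      Finset.sum_eq_zero fun k hk => by rw [hu0 k hk]; simp
    rw [hI0, zero_add]
  have hHk : ∀ k : Fin p, lf n p (l k) * ∏ m ∈ Finset.univ.erase k, lf n p (l m) =
      Hp n p l := fun k => by
    rw [Hp]; exact Finset.mul_prod_erase Finset.univ (fun m => lf n p (l m)) (Finset.mem_univ k)
  have hJj : ∀ j ∈ Jset, lf n p (l j) * ∏ k ∈ Jset.erase j, lf n p (l k) = PJ :=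
    fun j hj => by rw [hPJ]; exact Finset.mul_prod_erase Jset (fun m => lf n p (l m)) hj
  have hA : li * PJ * (sv n p i * MvPolynomial.C (ap u (l i)) * yv n p *
        ∏ m ∈ Finset.univ.erase i, lf n p (l m)) - PJ * sv n p i =
      (yv n p * Hp n p l - 1) * (sv n p i * PJ) := by
    rw [hu1, map_one, ← hHk i]
    ring
  have hB : ∀ j ∈ Jset, li * PJ * (sv n p j * MvPolynomial.C (ap u (l j)) * yv n p *
        ∏ m ∈ Finset.univ.erase j, lf n p (l m)) -
      MvPolynomial.C (ap u (l j)) * (li * (∏ k ∈ Jset.erase j, lf n p (l k)) * sv n p j) =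
      (yv n p * Hp n p l - 1) * (MvPolynomial.C (ap u (l j)) * sv n p j * li *
        ∏ k ∈ Jset.erase j, lf n p (l k)) := by
    intro j hj
    rw [← hHk j, ← hJj j hj]
    ring
  calc li * PJ * Sig - PJ * sv n p i
      - ∑ j ∈ Jset, MvPolynomial.C (ap u (l j)) *
          (li * (∏ k ∈ Jset.erase j, lf n p (l k)) * sv n p j)
      = (li * PJ * (sv n p i * MvPolynomial.C (ap u (l i)) * yv n p *
          ∏ m ∈ Finset.univ.erase i, lf n p (l m)) - PJ * sv n p i) +
        ∑ j ∈ Jset, (li * PJ * (sv n p j * MvPolynomial.C (ap u (l j)) * yv n p *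
          ∏ m ∈ Finset.univ.erase j, lf n p (l m)) -
          MvPolynomial.C (ap u (l j)) *
            (li * (∏ k ∈ Jset.erase j, lf n p (l k)) * sv n p j)) := by
        rw [hsplit, mul_add, Finset.mul_sum, Finset.sum_sub_distrib]
        ring
    _ = (yv n p * Hp n p l - 1) * (sv n p i * PJ) +
        ∑ j ∈ Jset, (yv n p * Hp n p l - 1) * (MvPolynomial.C (ap u (l j)) * sv n p j * li *
          ∏ k ∈ Jset.erase j, lf n p (l k)) := by
        rw [hA]
        exact congrArg _ (Finset.sum_congr rfl hB)
    _ = (yv n p * Hp n p l - 1) * (sv n p i * PJ +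
          ∑ j ∈ Jset, MvPolynomial.C (ap u (l j)) * sv n p j * li *
            ∏ k ∈ Jset.erase j, lf n p (l k)) := by
        rw [mul_add, Finset.mul_sum]

end Paper
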